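/- Let g : ℝ → ℝ be continuous, let 0 < β < α, κ > 0, ε > 0, and let [T, T'] be a nontrivial interval on which |g(t)| > κ e^{-(α-β)t + εt} for all t. If |∫_{-∞}^S e^{αt} g(t) dt| ≤ C̃ e^{βS} for all S ∈ ℝ and T ≥ (1/ε) log(2C̃(β+ε)/κ), then T' - T < (4C̃/κ) e^{-εT}. -/

import Mathlib

open MeasureTheory Set

set_option maxHeartbeats 1000000 in

theorem stmt2 (α β C κ ε : ℝ) (hβ : 0 < β) (hβα : β < α) (hC : 0 < C)
    (hκ : 0 < κ) (hε : 0 < ε) (g : ℝ → ℝ) (hg : Continuous g)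
    (hint : ∀ S : ℝ, IntegrableOn (fun t => Real.exp (α * t) * g t) (Iic S))
    (hbd : ∀ S : ℝ, |∫ t in Iic S, Real.exp (α * t) * g t| ≤ C * Real.exp (β * S))
    (T T' : ℝ) (hTT' : T < T')
    (hgt : ∀ t ∈ Icc T T', κ * Real.exp (-(α - β) * t + ε * t) < |g t|)
    (hT : (1 / ε) * Real.log (2 * C * (β + ε) / κ) ≤ T) :
    T' - T < (4 * C / κ) * Real.exp (-ε * T) := by
  set c : ℝ := β + ε with hc_def
  have hc : 0 < c := by positivity
  have hδ : 0 < T' - T := sub_pos.mpr hTT'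
  -- g is nonzero on [T, T']
  have hne : ∀ t ∈ Icc T T', g t ≠ 0 := by
    intro t ht h0
    have := hgt t ht
    rw [h0, abs_zero] at this
    nlinarith [Real.exp_pos (-(α - β) * t + ε * t)]
  -- g has constant sign on [T, T']
  have hsgn : (∀ t ∈ Icc T T', 0 < g t) ∨ (∀ t ∈ Icc T T', g t < 0) := by
    rcases lt_or_gt_of_ne (hne T ⟨le_refl T, le_of_lt hTT'⟩).symm with hpos | hneg
    · left
      intro t ht
      by_contra hle
      push_neg at hle
      have hlt : g t < 0 := lt_of_le_of_ne hle (hne t ht)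
      have hsub : Icc (g t) (g T) ⊆ g '' Icc T t :=
        intermediate_value_Icc' ht.1 hg.continuousOn
      obtain ⟨s, hs, hgs⟩ := hsub ⟨le_of_lt hlt, le_of_lt hpos⟩
      exact hne s ⟨hs.1, le_trans hs.2 ht.2⟩ hgs
    · right
      intro t ht
      by_contra hle
      push_neg at hle
      have hlt : 0 < g t := lt_of_le_of_ne hle (Ne.symm (hne t ht))
      have hsub : Icc (g T) (g t) ⊆ g '' Icc T t :=
        intermediate_value_Icc ht.1 hg.continuousOn
      obtain ⟨s, hs, hgs⟩ := hsub ⟨le_of_lt hneg, le_of_lt hlt⟩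
      exact hne s ⟨hs.1, le_trans hs.2 ht.2⟩ hgs
  -- the exponential integral
  have hexp_int : ∫ t in T..T', κ * Real.exp (c * t) =
      κ / c * (Real.exp (c * T') - Real.exp (c * T)) := by
    rw [intervalIntegral.integral_const_mul]
    rw [intervalIntegral.integral_comp_mul_left (fun x => Real.exp x) (ne_of_gt hc)]
    rw [integral_exp]
    simp [smul_eq_mul]
    ring
  -- pointwise bound
  have hpt : ∀ t ∈ Icc T T', κ * Real.exp (c * t) ≤ Real.exp (α * t) * |g t| := by
    intro t ht
    have h1 := hgt t ht
    have h2 : Real.exp (α * t) * (κ * Real.exp (-(α - β) * t + ε * t)) =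
        κ * Real.exp (c * t) := by
      rw [mul_comm (Real.exp (α * t)), mul_assoc, ← Real.exp_add]
      congr 2
      ring
    nlinarith [Real.exp_pos (α * t), le_of_lt h1]
  have hcont : Continuous (fun t => Real.exp (α * t) * g t) :=
    ((Real.continuous_exp.comp (continuous_const.mul continuous_id)).mul hg)
  have hii : IntervalIntegrable (fun t => Real.exp (α * t) * g t) volume T T' :=
    hcont.intervalIntegrable T T'
  have hiiexp : IntervalIntegrable (fun t => κ * Real.exp (c * t)) volume T T' :=
    (continuous_const.mul (Real.continuous_exp.comp
      (continuous_const.mul continuous_id))).intervalIntegrable T T'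
  -- lower bound on |∫ t in T..T'|
  have hlow : κ / c * (Real.exp (c * T') - Real.exp (c * T)) ≤
      |∫ t in T..T', Real.exp (α * t) * g t| := by
    rw [← hexp_int]
    rcases hsgn with hpos | hneg
    · have hmono : ∀ t ∈ Icc T T', κ * Real.exp (c * t) ≤ Real.exp (α * t) * g t := by
        intro t ht
        have := hpt t ht
        rwa [abs_of_pos (hpos t ht)] at this
      exact le_trans (intervalIntegral.integral_mono_on (le_of_lt hTT') hiiexp hii hmono)
        (le_abs_self _)
    · have hmono : ∀ t ∈ Icc T T', Real.exp (α * t) * g t ≤ -(κ * Real.exp (c * t)) := by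
        intro t ht
        have := hpt t ht
        rw [abs_of_neg (hneg t ht)] at this
        nlinarith
      have h1 : (∫ t in T..T', Real.exp (α * t) * g t) ≤
          ∫ t in T..T', -(κ * Real.exp (c * t)) :=
        intervalIntegral.integral_mono_on (le_of_lt hTT') hii hiiexp.neg hmono
      rw [intervalIntegral.integral_neg] at h1
      have : (∫ t in T..T', κ * Real.exp (c * t)) ≤
          -(∫ t in T..T', Real.exp (α * t) * g t) := by linarith
      exact le_trans this (neg_le_abs _)
  -- upper bound
  have hup : |∫ t in T..T', Real.exp (α * t) * g t| ≤
      C * Real.exp (β * T') + C * Real.exp (β * T) := by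
    rw [← intervalIntegral.integral_Iic_sub_Iic (hint T) (hint T')]
    calc |(∫ t in Iic T', Real.exp (α * t) * g t) - ∫ t in Iic T, Real.exp (α * t) * g t|
        ≤ |∫ t in Iic T', Real.exp (α * t) * g t| +
          |∫ t in Iic T, Real.exp (α * t) * g t| := abs_sub _ _
      _ ≤ C * Real.exp (β * T') + C * Real.exp (β * T) := add_le_add (hbd T') (hbd T)
  have key : κ / c * (Real.exp (c * T') - Real.exp (c * T)) ≤
      C * Real.exp (β * T') + C * Real.exp (β * T) := le_trans hlow hup
  -- hypothesis on T
  have hM : 2 * C * c ≤ κ * Real.exp (ε * T) := by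
    have hpos : 0 < 2 * C * c / κ := by positivity
    have hlog : Real.log (2 * C * c / κ) ≤ ε * T := by
      have h1 := mul_le_mul_of_nonneg_left hT (le_of_lt hε)
      have h2 : ε * (1 / ε * Real.log (2 * C * c / κ)) = Real.log (2 * C * c / κ) := by
        field_simp
      linarith
    have := Real.exp_le_exp.mpr hlog
    rw [Real.exp_log hpos] at this
    rw [div_le_iff₀ hκ] at this
    linarith
  -- abbreviations
  set E1 := Real.exp (β * T) with hE1
  set F1 := Real.exp (ε * T) with hF1
  set p := Real.exp (β * (T' - T)) with hp
  set q := Real.exp (ε * (T' - T)) with hq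
  have hE1p : 0 < E1 := Real.exp_pos _
  have hF1p : 0 < F1 := Real.exp_pos _
  have hpp : 0 < p := Real.exp_pos _
  have hq1 : 1 ≤ q := Real.one_le_exp (by nlinarith)
  have hcT : Real.exp (c * T) = E1 * F1 := by
    rw [hE1, hF1, ← Real.exp_add]; congr 1; rw [hc_def]; ring
  have hcT' : Real.exp (c * T') = E1 * F1 * (p * q) := by
    rw [hE1, hF1, hp, hq, ← Real.exp_add, ← Real.exp_add, ← Real.exp_add]
    congr 1; rw [hc_def]; ring
  have hβT' : Real.exp (β * T') = E1 * p := by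
    rw [hE1, hp, ← Real.exp_add]; congr 1; ring
  have hu : c * (T' - T) + 1 < p * q := by
    have := Real.add_one_lt_exp (x := c * (T' - T)) (by positivity)
    rw [hp, hq, ← Real.exp_add]
    calc c * (T' - T) + 1 < Real.exp (c * (T' - T)) := this
      _ = Real.exp (β * (T' - T) + ε * (T' - T)) := by congr 1; rw [hc_def]; ring
  set u := p * q with hu_def
  have hup2 : p ≤ u := by nlinarith
  have hu1 : 1 < u := by nlinarith
  -- key rewritten: κ/c * (E1*F1*u - E1*F1) ≤ C*E1*p + C*E1
  rw [hcT, hcT', hβT'] at key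
  clear hgt hbd hint hg hcont hii hiiexp hsgn hne hpt hexp_int hlow hup hT
  clear_value c E1 F1 p q u
  have key2 : κ * (F1 * (u - 1)) ≤ C * c * (u + 1) := by
    have h : κ / c * (E1 * F1 * u - E1 * F1) ≤ C * (E1 * p) + C * E1 := key
    rw [div_mul_eq_mul_div, div_le_iff₀ hc] at h
    have hp2 : C * c * E1 * p ≤ C * c * E1 * u :=
      mul_le_mul_of_nonneg_left hup2 (by positivity)
    have h2 : κ * (F1 * (u - 1)) * E1 ≤ C * c * (u + 1) * E1 := by linarith [h, hp2]
    exact (mul_le_mul_iff_of_pos_right hE1p).mp h2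
  have hu3 : u ≤ 3 := by
    nlinarith [mul_le_mul_of_nonneg_right hM (by linarith : (0:ℝ) ≤ u - 1),
      mul_pos hC hc]
  have hfin : κ * F1 * (T' - T) < 4 * C := by
    have h1 : κ * F1 * (c * (T' - T)) < κ * F1 * (u - 1) :=
      mul_lt_mul_of_pos_left (by linarith) (mul_pos hκ hF1p)
    have h2 : κ * F1 * (T' - T) * c < 4 * C * c := by nlinarith [key2, h1, mul_pos hC hc]
    exact (mul_lt_mul_iff_of_pos_right hc).mp h2
  have hexpneg : Real.exp (-ε * T) = F1⁻¹ := by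
    rw [hF1, ← Real.exp_neg]; congr 1; ring
  rw [hexpneg]
  rw [show (4 : ℝ) * C / κ * F1⁻¹ = 4 * C / (κ * F1) by field_simp]
  rw [lt_div_iff₀ (by positivity)]
  nlinarith [hfin]
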